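/- Minimality of algorithmically reached models: for any program P, if there is an algorithmic step sequence from ⊥ to Δ under P and Δ is a model of P (T_P(Δ) = {Δ}), then Δ is a minimal model: for every model M of P with M ≤ Δ, one has M = Δ. -/
import Mathlib


open scoped Classical

namespace FCLP

/-! ### Terms -/

/-- Ground (Herbrand) terms: uninterpreted function symbols applied to ground terms. -/
inductive GTerm : Type where
  | func : ℕ → List GTerm → GTerm

/-- Terms possibly containing variables. -/
inductive VTerm : Type where
  | var : ℕ → VTerm
  | func : ℕ → List VTerm → VTerm

/-- A substitution is a total map from variables to ground terms. -/
abbrev Subst := ℕ → GTerm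

mutual
  /-- Applying a substitution to a term. -/
  def VTerm.subst (σ : Subst) : VTerm → GTerm
    | .var x => σ x
    | .func f args => .func f (VTerm.substList σ args)
  def VTerm.substList (σ : Subst) : List VTerm → List GTerm
    | [] => []
    | t :: ts => VTerm.subst σ t :: VTerm.substList σ ts
end

/-- The variable `x` occurs in the term. -/
inductive VTerm.HasVar : VTerm → ℕ → Prop where
  | var (x : ℕ) : VTerm.HasVar (.var x) x
  | func {f : ℕ} {args : List VTerm} {t : VTerm} {x : ℕ} :
      t ∈ args → VTerm.HasVar t x → VTerm.HasVar (.func f args) x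

/-! ### Attributes, facts, rules, programs -/

/-- An attribute `p(t₁,...,tₙ)`: a predicate applied to ground terms. -/
structure Attr where
  pred : ℕ
  args : List GTerm

/-- A fact `p(t̄) is v`. -/
structure Fact where
  attr : Attr
  value : GTerm

/-- A premise `p(t̄) is v`, possibly containing variables. -/
structure VAtom where
  pred : ℕ
  args : List VTerm
  value : VTerm

def VAtom.subst (σ : Subst) (A : VAtom) : Fact :=
  ⟨⟨A.pred, A.args.map (VTerm.subst σ)⟩, A.value.subst σ⟩

def VAtom.HasVar (A : VAtom) (x : ℕ) : Prop :=
  (∃ t ∈ A.args, t.HasVar x) ∨ A.value.HasVar x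

/-- A rule head: open `p(t̄) is? v` or closed `p(t̄) is {v₁,...,vₘ}`. -/
inductive Head : Type where
  | opn : ℕ → List VTerm → VTerm → Head
  | closed : ℕ → List VTerm → List VTerm → Head

def Head.HasVar : Head → ℕ → Prop
  | .opn _ args v, x => (∃ t ∈ args, t.HasVar x) ∨ v.HasVar x
  | .closed _ args vs, x => (∃ t ∈ args, t.HasVar x) ∨ ∃ v ∈ vs, v.HasVar x

/-- The ground attribute of a rule head under a substitution. -/
def Head.groundAttr (σ : Subst) : Head → Attr
  | .opn p args _ => ⟨p, args.map (VTerm.subst σ)⟩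
  | .closed p args _ => ⟨p, args.map (VTerm.subst σ)⟩

/-- A rule `H ← F` with a finite collection of premises. -/
structure Rule where
  head : Head
  prems : List VAtom

/-- Wellformedness: closed heads offer at least one value, and every
variable in the head occurs in a premise. -/
def Rule.WF (r : Rule) : Prop :=
  (∀ x, r.head.HasVar x → ∃ A ∈ r.prems, A.HasVar x) ∧
  (∀ p args vs, r.head = .closed p args vs → vs ≠ [])

/-- A program is a set of rules. -/
abbrev Program := Set Rule

/-- A program is a *finite* set of *wellformed* rules. -/
def Program.WFP (P : Program) : Prop := P.Finite ∧ ∀ r ∈ P, r.WF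

/-! ### Fact-set semantics -/

/-- A set of facts is consistent when each attribute has at most one value. -/
def Consistent (D : Set Fact) : Prop :=
  ∀ f ∈ D, ∀ g ∈ D, f.attr = g.attr → f = g

/-- `σ` satisfies the premises `F` in the fact-set database `D`. -/
def satF (σ : Subst) (F : List VAtom) (D : Set Fact) : Prop :=
  ∀ A ∈ F, A.subst σ ∈ D

/-- Fact-set evolution `D →_P S`. -/
inductive Evolve (P : Program) : Set Fact → Set (Set Fact) → Prop where
  | triv (D : Set Fact) : Evolve P D {D}
  | closed {D : Set Fact} {r : Rule} {p : ℕ} {args vs : List VTerm} {σ : Subst} :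
      r ∈ P → r.head = .closed p args vs → satF σ r.prems D →
      Evolve P D
        { E | ∃ v ∈ vs,
            E = insert (⟨⟨p, args.map (VTerm.subst σ)⟩, VTerm.subst σ v⟩ : Fact) D ∧
            Consistent E }
  | opn {D : Set Fact} {r : Rule} {p : ℕ} {args : List VTerm} {v : VTerm} {σ : Subst} :
      r ∈ P → r.head = .opn p args v → satF σ r.prems D →
      Evolve P D
        ({D} ∪ { E | E = insert (⟨⟨p, args.map (VTerm.subst σ)⟩, VTerm.subst σ v⟩ : Fact) D ∧
                     Consistent E })

/-- `P` allows `D` to step to `D'`. -/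
def Step (P : Program) (D D' : Set Fact) : Prop := ∃ S, Evolve P D S ∧ D' ∈ S

/-- A database is saturated when its only evolution is the singleton of itself. -/
def Saturated (P : Program) (D : Set Fact) : Prop := ∀ S, Evolve P D S → S = {D}

/-- A solution: a saturated database reachable from `∅` by a (finite) step sequence. -/
def Solution (P : Program) (D : Set Fact) : Prop :=
  Relation.ReflTransGen (Step P) ∅ D ∧ Saturated P D

/-! ### Constraints and constraint databases -/

/-- A constraint: `just t` or `noneOf X`. -/
inductive Constraint : Type where
  | just : GTerm → Constraint
  | noneOf : Set GTerm → Constraint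

/-- The order on constraints. -/
def Constraint.le : Constraint → Constraint → Prop
  | .noneOf X, .noneOf Y => X ⊆ Y
  | .noneOf X, .just t => t ∉ X
  | .just t, .just t' => t = t'
  | .just _, .noneOf _ => False

instance : LE Constraint := ⟨Constraint.le⟩

/-- Least upper bound of a (compatible) set of constraints: if some `just t` is present
it is the lub; otherwise it is `noneOf` of the union. -/
noncomputable def Constraint.lub (C : Set Constraint) : Constraint :=
  if h : ∃ t, Constraint.just t ∈ C then .just h.choose
  else .noneOf (⋃₀ { X | Constraint.noneOf X ∈ C })

/-- A constraint database: a map from ground attributes to constraints,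
ordered pointwise (via the `Pi` order). -/
abbrev CDB := Attr → Constraint

/-- The least constraint database: every attribute maps to `noneOf ∅`. -/
def cdbBot : CDB := fun _ => .noneOf ∅

/-- Pointwise least upper bound of a (compatible) set of constraint databases. -/
noncomputable def CDB.lub (S : Set CDB) : CDB :=
  fun a => Constraint.lub ((fun Δ => Δ a) '' S)

/-- A subset of a poset is compatible when it has an upper bound. -/
def Compatible {α : Type*} [LE α] (X : Set α) : Prop := ∃ y, ∀ x ∈ X, x ≤ y

/-- Binary compatibility. -/
def Compat {α : Type*} [LE α] (x y : α) : Prop := Compatible ({x, y} : Set α)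

/-- A choice set: a pairwise-incompatible set of constraint databases. -/
def IsChoiceSet (𝒞 : Set CDB) : Prop :=
  ∀ D ∈ 𝒞, ∀ E ∈ 𝒞, Compat D E → D = E

/-- The order on choice sets. -/
def ChoiceLE (𝒞₁ 𝒞₂ : Set CDB) : Prop :=
  ∀ D₂ ∈ 𝒞₂, ∃ D₁ ∈ 𝒞₁, D₁ ≤ D₂

/-- Least upper bound of an indexed family of choice sets:
`⋁ᵢ 𝒞ᵢ = { ⋁ Im(f) : f ∈ ∏ᵢ 𝒞ᵢ, Im(f) compatible }`. -/
noncomputable def ChoiceJoin {I : Type*} (𝒞 : I → Set CDB) : Set CDB :=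
  { E | ∃ f : I → CDB, (∀ i, f i ∈ 𝒞 i) ∧ Compatible (Set.range f) ∧
        E = CDB.lub (Set.range f) }

/-- Least upper bound of a set of choice sets. -/
noncomputable def ChoiceSJoin (S : Set (Set CDB)) : Set CDB :=
  ChoiceJoin (fun C : S => (C : Set CDB))

/-- Greatest lower bound of a set of choice sets:
`⋀ X = ⋁ {𝒞 : ∀ x ∈ X, 𝒞 ≤ x}` (join over choice-set lower bounds). -/
noncomputable def ChoiceMeet (S : Set (Set CDB)) : Set CDB :=
  ChoiceSJoin { C | IsChoiceSet C ∧ ∀ X ∈ S, ChoiceLE C X }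

/-! ### Immediate consequence -/

/-- `σ` satisfies `F` in the constraint database `Δ`. -/
def satC (σ : Subst) (F : List VAtom) (Δ : CDB) : Prop :=
  ∀ A ∈ F, Constraint.just (A.value.subst σ) ≤ Δ ⟨A.pred, A.args.map (VTerm.subst σ)⟩

/-- The constraint database mapping `a` to `c` and every other attribute to `noneOf ∅`. -/
noncomputable def unitCDB (a : Attr) (c : Constraint) : CDB :=
  fun a' => if a' = a then c else .noneOf ∅

/-- The choice set `⟨σH⟩` determined by a ground rule head. -/
noncomputable def headChoice (σ : Subst) : Head → Set CDB
  | .opn p args v =>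
      { unitCDB ⟨p, args.map (VTerm.subst σ)⟩ (.just (v.subst σ)),
        unitCDB ⟨p, args.map (VTerm.subst σ)⟩ (.noneOf {v.subst σ}) }
  | .closed p args vs =>
      { Δ | ∃ v ∈ vs, Δ = unitCDB ⟨p, args.map (VTerm.subst σ)⟩ (.just (v.subst σ)) }

/-- The immediate consequence operator
`T_P(Δ) = {Δ} ∨ ⋁{ ⟨σH⟩ : (H ← F) ∈ P, σ satisfies F in Δ }`. -/
noncomputable def TP (P : Program) (Δ : CDB) : Set CDB :=
  ChoiceSJoin
    (insert {Δ} { C | ∃ r ∈ P, ∃ σ : Subst, satC σ r.prems Δ ∧ C = headChoice σ r.head })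

/-- The attribute-specific immediate consequence operator `T_{P[a]}`. -/
noncomputable def TPa (P : Program) (a : Attr) (Δ : CDB) : Set CDB :=
  ChoiceSJoin
    { C | ∃ r ∈ P, ∃ σ : Subst, satC σ r.prems Δ ∧ r.head.groundAttr σ = a ∧
          C = headChoice σ r.head }

/-- The lifted immediate consequence operator `T_P*(𝒞) = ⋃_{Δ ∈ 𝒞} T_P(Δ)`. -/
noncomputable def TPs (P : Program) (𝒞 : Set CDB) : Set CDB :=
  { E | ∃ Δ ∈ 𝒞, E ∈ TP P Δ }

/-- The least fixed point of `T_P*`, defined à la Knaster–Tarski as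
`⋀ {𝒞 : T_P*(𝒞) ≤ 𝒞}`. -/
noncomputable def lfpTPs (P : Program) : Set CDB :=
  ChoiceMeet { C | IsChoiceSet C ∧ ChoiceLE (TPs P C) C }

/-! ### Positive and finite constraint databases, promotion and erasure -/

/-- A constraint database is positive when `noneOf X` only occurs with `X = ∅`. -/
def CDBPositive (Δ : CDB) : Prop := ∀ a X, Δ a = .noneOf X → X = ∅

/-- A constraint database is finite. -/
def CDBFinite (Δ : CDB) : Prop :=
  { a | Δ a ≠ .noneOf ∅ }.Finite ∧ ∀ a X, Δ a = .noneOf X → X.Finite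

/-- Promotion of a (consistent) fact set to a constraint database. -/
noncomputable def promote (D : Set Fact) : CDB :=
  fun a => if h : ∃ v, (⟨a, v⟩ : Fact) ∈ D then .just h.choose else .noneOf ∅

/-- Erasure of a constraint database to a fact set. -/
def eraseCDB (Δ : CDB) : Set Fact := { f | Δ f.attr = .just f.value }

/-! ### The abstract algorithm -/

/-- `P` allows `Δ` to take an algorithmic step to any `Δ' ∈ {Δ} ∨ T_{P[a]}(Δ)`
for some attribute `a`, provided `T_P(Δ) ≠ ∅`. -/
noncomputable def AlgStep (P : Program) (Δ Δ' : CDB) : Prop :=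
  TP P Δ ≠ ∅ ∧ ∃ a : Attr, Δ' ∈ ChoiceSJoin {({Δ} : Set CDB), TPa P a Δ}

/-! ### Datalog -/

/-- A datalog atom, possibly with variables. -/
structure DAtom where
  pred : ℕ
  args : List VTerm

/-- A ground datalog atom. -/
structure GAtom where
  pred : ℕ
  args : List GTerm

def DAtom.subst (σ : Subst) (A : DAtom) : GAtom := ⟨A.pred, A.args.map (VTerm.subst σ)⟩

/-- A datalog rule `p(t̄) ← p₁(t̄₁), ..., pₙ(t̄ₙ)`. -/
structure DRule where
  head : DAtom
  prems : List DAtom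

/-- Every variable of the head appears in a premise. -/
def DRule.WF (r : DRule) : Prop :=
  ∀ x, (∃ t ∈ r.head.args, t.HasVar x) → ∃ A ∈ r.prems, ∃ t ∈ A.args, t.HasVar x

/-- The datalog immediate consequence operator. -/
def dImmCons (P : Set DRule) (X : Set GAtom) : Set GAtom :=
  { g | ∃ r ∈ P, ∃ σ : Subst, (∀ A ∈ r.prems, A.subst σ ∈ X) ∧ g = r.head.subst σ }

/-- The least model of a datalog program: the least fixed point of `dImmCons`. -/
def dModel (P : Set DRule) : Set GAtom := ⋂₀ { X | dImmCons P X ⊆ X }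

/-- Translation of a datalog program to a finite-choice logic program, using the
constant with (fresh) function symbol `u` as the value `unit`. -/
def trDatalog (u : ℕ) (P : Set DRule) : Program :=
  { r | ∃ dr ∈ P,
      r = ⟨Head.closed dr.head.pred dr.head.args [VTerm.func u []],
           dr.prems.map (fun A => ⟨A.pred, A.args, VTerm.func u []⟩)⟩ }

/-! ### Answer set programming -/

/-- A ground ASP rule `p ← p₁,...,pₙ, ¬q₁,...,¬qₘ` over propositional atoms. -/
structure ASPRule where
  head : ℕ
  pos : List ℕ
  neg : List ℕ

/-- One step of the immediate consequence operator of the reduct `P^X`. -/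
def reductCons (P : Set ASPRule) (X : Set ℕ) (Y : Set ℕ) : Set ℕ :=
  { p | ∃ r ∈ P, r.head = p ∧ (∀ q ∈ r.pos, q ∈ Y) ∧ (∀ q ∈ r.neg, q ∉ X) }

/-- The least model of the reduct `P^X`. -/
def reductModel (P : Set ASPRule) (X : Set ℕ) : Set ℕ :=
  ⋂₀ { Y | reductCons P X Y ⊆ Y }

/-- `X` is a stable model of `P` when the least model of the reduct `P^X` equals `X`. -/
def StableModel (P : Set ASPRule) (X : Set ℕ) : Prop := reductModel P X = X

/-- The fresh constant `tt` (as a ground term). -/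
def ttT : GTerm := .func 0 []
/-- The fresh constant `ff` (as a ground term). -/
def ffT : GTerm := .func 1 []
/-- The constant `tt` as a (closed) term of the rule language. -/
def ttV : VTerm := .func 0 []
/-- The constant `ff` as a (closed) term of the rule language. -/
def ffV : VTerm := .func 1 []

/-- The premise `p is tt`. -/
def posPrem (p : ℕ) : VAtom := ⟨p, [], ttV⟩
/-- The premise `q is ff`. -/
def negPrem (q : ℕ) : VAtom := ⟨q, [], ffV⟩

/-- Translation of an ASP program to a finite-choice logic program: each rule
`p ← p₁,...,pₙ, ¬q₁,...,¬qₘ` becomes `m` open rules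
`qⱼ is? ff ← p₁ is tt,...,pₙ is tt, q₁ is ff,...,q_{j-1} is ff` and one closed rule
`p is {tt} ← p₁ is tt,...,pₙ is tt, q₁ is ff,...,qₘ is ff`. -/
def trASP (P : Set ASPRule) : Program :=
  { r | ∃ ar ∈ P,
      (∃ j : Fin ar.neg.length,
        r = ⟨Head.opn (ar.neg.get j) [] ffV,
             ar.pos.map posPrem ++ (ar.neg.take j.val).map negPrem⟩) ∨
      r = ⟨Head.closed ar.head [] [ttV],
           ar.pos.map posPrem ++ ar.neg.map negPrem⟩ }

/-! ### Auxiliary lemmas for minimality -/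

lemma cle_just {t : GTerm} : ∀ {c : Constraint}, Constraint.just t ≤ c → c = .just t
  | .just t', h => by have ht : t = t' := h; rw [ht]
  | .noneOf _, h => (h : False).elim

lemma cle_refl : ∀ c : Constraint, c ≤ c
  | .just t => rfl
  | .noneOf X => fun _ h => h

lemma cle_bot : ∀ c : Constraint, Constraint.noneOf ∅ ≤ c
  | .just t => Set.notMem_empty t
  | .noneOf X => Set.empty_subset X

lemma cle_trans {a b c : Constraint} (h1 : a ≤ b) (h2 : b ≤ c) : a ≤ c := by
  cases a with
  | just t => rw [cle_just h1] at h2; exact h2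
  | noneOf X =>
    cases b with
    | just s => rw [cle_just h2]; exact h1
    | noneOf Y =>
      cases c with
      | just t => exact fun hx => (h2 : t ∉ Y) ((h1 : X ⊆ Y) hx)
      | noneOf Z => exact fun s hs => (h2 : Y ⊆ Z) ((h1 : X ⊆ Y) hs)

lemma cle_antisymm {a b : Constraint} (h1 : a ≤ b) (h2 : b ≤ a) : a = b := by
  cases a with
  | just t => exact (cle_just h1).symm
  | noneOf X =>
    cases b with
    | just s => exact absurd h2 (by intro h; exact h)
    | noneOf Y => exact congrArg _ (Set.Subset.antisymm (h1 : X ⊆ Y) (h2 : Y ⊆ X))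

lemma club_upper {C : Set Constraint} (hc : Compatible C) {x : Constraint} (hx : x ∈ C) :
    x ≤ Constraint.lub C := by
  unfold Constraint.lub
  split
  next h =>
    obtain ⟨y, hy⟩ := hc
    have h2 := cle_just (hy _ h.choose_spec)
    cases x with
    | just t =>
        have h3 := cle_just (hy _ hx)
        have ht : t = h.choose := by rw [h3] at h2; injection h2
        exact ht
    | noneOf X =>
        have h3 := hy _ hx
        rw [h2] at h3
        exact h3
  next h =>
    cases x with
    | just t => exact absurd ⟨t, hx⟩ h
    | noneOf X => exact fun s hs => ⟨X, hx, hs⟩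

lemma club_le {C : Set Constraint} {m : Constraint} (h : ∀ x ∈ C, x ≤ m) :
    Constraint.lub C ≤ m := by
  unfold Constraint.lub
  split
  next he => exact h _ he.choose_spec
  next he =>
    cases m with
    | just t =>
        rintro ⟨X, hX, htX⟩
        exact (h _ hX : t ∉ X) htX
    | noneOf Y =>
        rintro s ⟨X, hX, hsX⟩
        exact (h _ hX : X ⊆ Y) hsX

lemma cdb_le_trans {x y z : CDB} (h1 : x ≤ y) (h2 : y ≤ z) : x ≤ z :=
  fun a => cle_trans (h1 a) (h2 a)

lemma cdb_le_refl (x : CDB) : x ≤ x := fun a => cle_refl _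

lemma cdb_lub_upper {S : Set CDB} (hc : Compatible S) {x : CDB} (hx : x ∈ S) :
    x ≤ CDB.lub S := by
  obtain ⟨y, hy⟩ := hc
  intro a
  exact club_upper ⟨y a, by rintro c ⟨Δ, hΔ, rfl⟩; exact hy Δ hΔ a⟩ ⟨x, hx, rfl⟩

lemma cdb_lub_le {S : Set CDB} {m : CDB} (h : ∀ x ∈ S, x ≤ m) : CDB.lub S ≤ m := by
  intro a
  apply club_le
  rintro c ⟨Δ, hΔ, rfl⟩
  exact h Δ hΔ a

lemma unit_le {a : Attr} {c : Constraint} {X : CDB} : unitCDB a c ≤ X ↔ c ≤ X a := by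
  constructor
  · intro h
    have h1 := h a
    unfold unitCDB at h1
    rwa [if_pos rfl] at h1
  · intro h b
    unfold unitCDB
    by_cases hb : b = a
    · subst hb; rwa [if_pos rfl]
    · rw [if_neg hb]; exact cle_bot _

lemma satC_mono {σ : Subst} {F : List VAtom} {Δ Δ' : CDB} (h : Δ ≤ Δ')
    (hs : satC σ F Δ) : satC σ F Δ' := by
  intro A hA
  have h1 := hs A hA
  have h2 := cle_just h1
  have h3 := h ⟨A.pred, A.args.map (VTerm.subst σ)⟩
  rw [h2] at h3
  rw [cle_just h3]
  exact cle_refl _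

lemma head_forced {σ : Subst} {H : Head} {M Δ : CDB} (hMΔ : M ≤ Δ)
    {c c' : CDB} (hc : c ∈ headChoice σ H) (hcM : c ≤ M)
    (hc' : c' ∈ headChoice σ H) (hc'Δ : c' ≤ Δ) : c' ≤ M := by
  cases H with
  | opn p args v =>
      simp only [headChoice, Set.mem_insert_iff, Set.mem_singleton_iff] at hc hc'
      rcases hc with rfl | rfl <;> rcases hc' with rfl | rfl
      · exact hcM
      · exfalso
        have h1 := cle_just (unit_le.1 hcM)
        have h2 := unit_le.1 hc'Δ
        have h3 := hMΔ ⟨p, args.map (VTerm.subst σ)⟩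
        rw [h1] at h3
        rw [cle_just h3] at h2
        exact (h2 : v.subst σ ∉ ({v.subst σ} : Set GTerm)) rfl
      · exfalso
        have h1 := unit_le.1 hcM
        have h2 := cle_just (unit_le.1 hc'Δ)
        have h3 := hMΔ ⟨p, args.map (VTerm.subst σ)⟩
        rw [h2] at h3
        cases hMa : M ⟨p, args.map (VTerm.subst σ)⟩ with
        | just w =>
            rw [hMa] at h1 h3
            exact (h1 : w ∉ ({v.subst σ} : Set GTerm)) (h3 : w = v.subst σ)
        | noneOf X =>
            rw [hMa] at h1 h3
            exact (h3 : v.subst σ ∉ X) ((h1 : ({v.subst σ} : Set GTerm) ⊆ X) rfl)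
      · exact hcM
  | closed p args vs =>
      obtain ⟨w, hw, rfl⟩ := hc
      obtain ⟨w', hw', rfl⟩ := hc'
      have h1 := cle_just (unit_le.1 hcM)
      have h2 := cle_just (unit_le.1 hc'Δ)
      have h3 := hMΔ ⟨p, args.map (VTerm.subst σ)⟩
      rw [h1, h2] at h3
      have hww : w.subst σ = w'.subst σ := h3
      rw [unit_le, h1, ← hww]
      exact cle_refl _

lemma model_head {P : Program} {M : CDB} (hM : TP P M = {M}) {r : Rule} (hr : r ∈ P)
    {σ : Subst} (hs : satC σ r.prems M) : ∃ c ∈ headChoice σ r.head, c ≤ M := by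
  have hMem : M ∈ TP P M := by rw [hM]; exact rfl
  simp only [TP, ChoiceSJoin, ChoiceJoin, Set.mem_setOf_eq] at hMem
  obtain ⟨f, hf, hcomp, heq⟩ := hMem
  have hC : headChoice σ r.head ∈
      insert ({M} : Set CDB)
        { C | ∃ r ∈ P, ∃ σ : Subst, satC σ r.prems M ∧ C = headChoice σ r.head } :=
    Set.mem_insert_iff.2 (Or.inr ⟨r, hr, σ, hs, rfl⟩)
  refine ⟨f ⟨_, hC⟩, hf ⟨_, hC⟩, ?_⟩
  have hub := cdb_lub_upper hcomp ⟨⟨_, hC⟩, rfl⟩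
  rwa [← heq] at hub

lemma step_le {P : Program} {x y : CDB} (h : AlgStep P x y) : x ≤ y := by
  obtain ⟨-, a, hy⟩ := h
  obtain ⟨f, hf, hcomp, rfl⟩ := hy
  have hx : ({x} : Set CDB) ∈ ({({x} : Set CDB), TPa P a x} : Set (Set CDB)) :=
    Set.mem_insert _ _
  have hfx : f ⟨_, hx⟩ = x := hf ⟨_, hx⟩
  have hub := cdb_lub_upper hcomp ⟨⟨_, hx⟩, rfl⟩
  rwa [hfx] at hub

lemma seq_le {P : Program} {x y : CDB} (h : Relation.ReflTransGen (AlgStep P) x y) :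
    x ≤ y := by
  induction h with
  | refl => exact cdb_le_refl _
  | tail _ hstep ih => exact cdb_le_trans ih (step_le hstep)

lemma step_below {P : Program} {M Δ x y : CDB} (hM : TP P M = {M}) (hMΔ : M ≤ Δ)
    (hx : x ≤ M) (hstep : AlgStep P x y) (hyΔ : y ≤ Δ) : y ≤ M := by
  obtain ⟨-, a, hy⟩ := hstep
  obtain ⟨f, hf, hcomp, rfl⟩ := hy
  apply cdb_lub_le
  rintro E ⟨i, rfl⟩
  have hEΔ : f i ≤ Δ := cdb_le_trans (cdb_lub_upper hcomp ⟨i, rfl⟩) hyΔ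
  rcases Set.mem_insert_iff.1 i.2 with h1 | h1
  · have hfi : f i ∈ ({x} : Set CDB) := h1 ▸ hf i
    rw [Set.mem_singleton_iff.1 hfi]
    exact hx
  · have hE : f i ∈ TPa P a x := (Set.mem_singleton_iff.1 h1) ▸ hf i
    obtain ⟨g, hg, hgcomp, hEeq⟩ := hE
    rw [hEeq]
    apply cdb_lub_le
    rintro c ⟨j, rfl⟩
    obtain ⟨r, hr, σ, hsat, hattr, hCeq⟩ := j.2
    have hgj : g j ∈ headChoice σ r.head := hCeq ▸ hg j
    have hgjΔ : g j ≤ Δ := cdb_le_trans (cdb_lub_upper hgcomp ⟨j, rfl⟩) (hEeq ▸ hEΔ)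
    obtain ⟨c0, hc0, hc0M⟩ := model_head hM hr (satC_mono hx hsat)
    exact head_forced hMΔ hc0 hc0M hgj hgjΔ

/-- Minimality of algorithmically reached models: a model reached by an algorithmic
step sequence from `⊥` is a minimal model. -/
theorem algorithm_reaches_minimal_models (P : Program) (hP : Program.WFP P) (Δ : CDB)
    (hseq : Relation.ReflTransGen (AlgStep P) cdbBot Δ) (hmodel : TP P Δ = {Δ}) :
    ∀ M : CDB, TP P M = {M} → M ≤ Δ → M = Δ := by
  intro M hMmod hMΔ
  have hΔM : Δ ≤ M := by
    have key : ∀ x (h : Relation.ReflTransGen (AlgStep P) x Δ), x ≤ M → Δ ≤ M := by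
      intro x h
      induction h using Relation.ReflTransGen.head_induction_on with
      | refl => exact id
      | head hstep hrest ih =>
          intro hxM
          exact ih (step_below hMmod hMΔ hxM hstep (seq_le hrest))
    exact key _ hseq (fun a => cle_bot _)
  funext a
  exact cle_antisymm (hMΔ a) (hΔM a)

end FCLP
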